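/- Let ρ_DS = ∑_{0 ≤ i ≤ j < d} p_{ij} |D_{ij}⟩⟨D_{ij}| be a diagonal symmetric state on ℂ^d ⊗ ℂ^d, with p_{ij} ≥ 0 and ∑_{i≤j} p_{ij} = 1. Then the partial transpose ρ_DS^Γ (defined by ρ^Γ((i,k),(j,l)) = ρ((i,l),(j,k))) is positive semidefinite if and only if the d×d matrix M_d(ρ_DS), with entries M_d(ρ_DS)_{ii} = p_{ii} and M_d(ρ_DS)_{ij} = p_{ij}/2 for i ≠ j, is positive semidefinite; since M_d(ρ_DS) is automatically entrywise nonnegative, ρ_DS is PPT if and only if M_d(ρ_DS) is doubly nonnegative. -/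

import Mathlib

open Matrix ComplexOrder

/-- The Dicke state `|D_{ij}⟩` on `ℂ^d ⊗ ℂ^d`: `|D_{ii}⟩ = |ii⟩` and
`|D_{ij}⟩ = (|ij⟩ + |ji⟩)/√2` for `i ≠ j`. -/
noncomputable def dicke {d : ℕ} (i j : Fin d) : (Fin d × Fin d) → ℂ :=
  if i = j then fun x => if x = (i, i) then 1 else 0
  else fun x => if x = (i, j) ∨ x = (j, i) then ((Real.sqrt 2)⁻¹ : ℝ) else 0

/-- The diagonal symmetric state `ρ_DS = ∑_{0 ≤ i ≤ j < d} p_{ij} |D_{ij}⟩⟨D_{ij}|`. -/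
noncomputable def rhoDS {d : ℕ} (p : Fin d → Fin d → ℝ) :
    Matrix (Fin d × Fin d) (Fin d × Fin d) ℂ :=
  ∑ i : Fin d, ∑ j : Fin d,
    if i ≤ j then (p i j : ℂ) • Matrix.vecMulVec (dicke i j) (star (dicke i j)) else 0

/-- The matrix `M_d(ρ_DS)`: diagonal entries `p_{ii}`, off-diagonal entries `p_{ij}/2`. -/
noncomputable def Mds {d : ℕ} (p : Fin d → Fin d → ℝ) : Matrix (Fin d) (Fin d) ℝ :=
  Matrix.of fun i j => if i = j then p i i else (if i ≤ j then p i j else p j i) / 2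

/-- The partial transpose `ρ^Γ((i,k),(j,l)) = ρ((i,l),(j,k))`. -/
def partialTransposeB {d : ℕ}
    (ρ : Matrix (Fin d × Fin d) (Fin d × Fin d) ℂ) :
    Matrix (Fin d × Fin d) (Fin d × Fin d) ℂ :=
  Matrix.of fun x y => ρ (x.1, y.2) (y.1, x.2)

/-! ### Auxiliary lemmas -/

lemma mds_symm {d : ℕ} (p : Fin d → Fin d → ℝ) (i j : Fin d) : Mds p i j = Mds p j i := by
  unfold Mds
  by_cases h : i = j
  · subst h; simp
  · simp only [Matrix.of_apply, h, Ne.symm h, if_false]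
    rcases le_or_gt i j with h1 | h1
    · have h2 : ¬ j ≤ i := fun hh => h (le_antisymm h1 hh)
      simp [h1, h2]
    · have h2 : ¬ i ≤ j := not_le_of_gt h1
      simp [h2, h1.le]

lemma dicke_star {d : ℕ} (i j : Fin d) (x : Fin d × Fin d) :
    star (dicke i j x) = dicke i j x := by
  unfold dicke
  split_ifs with h
  · simp only
    split_ifs <;> simp
  · simp only
    split_ifs <;> simp

lemma dicke_apply_ne {d : ℕ} {i j : Fin d} {x : Fin d × Fin d}
    (h1 : x ≠ (i, j)) (h2 : x ≠ (j, i)) : dicke i j x = 0 := by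
  unfold dicke
  split_ifs with h
  · subst h; simp only [if_neg h1]
  · simp only [if_neg (not_or.mpr ⟨h1, h2⟩)]

/-- The explicit form of the partial transpose of `rhoDS`. -/
noncomputable def Aform {d : ℕ} (p : Fin d → Fin d → ℝ) :
    Matrix (Fin d × Fin d) (Fin d × Fin d) ℂ :=
  Matrix.of fun x y =>
    if x.1 = x.2 ∧ y.1 = y.2 then (Mds p x.1 y.1 : ℂ)
    else if x = y then (Mds p x.1 x.2 : ℂ) else 0

lemma sqrt2_inv_sq : ((Real.sqrt 2)⁻¹ : ℝ) * ((Real.sqrt 2)⁻¹ : ℝ) = 2⁻¹ := by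
  rw [← mul_inv]
  norm_num [Real.mul_self_sqrt]

lemma pt_eq {d : ℕ} (p : Fin d → Fin d → ℝ) :
    partialTransposeB (rhoDS p) = Aform p := by
  ext ⟨a, b⟩ ⟨c, e⟩
  show (rhoDS p) (a, e) (c, b) = _
  unfold rhoDS
  simp only [Matrix.sum_apply]
  have hterm : ∀ i j : Fin d,
      (if i ≤ j then (p i j : ℂ) • Matrix.vecMulVec (dicke i j) (star (dicke i j)) else 0)
        (a, e) (c, b)
      = (if i ≤ j then (p i j : ℂ) * (dicke i j (a, e) * dicke i j (c, b)) else 0) := by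
    intro i j
    split_ifs with h
    · simp [Matrix.vecMulVec_apply, Pi.star_apply, dicke_star, mul_assoc]
    · simp
  simp only [hterm]
  -- collapse the double sum to the pair {(a,e),(e,a)}
  rw [← Fintype.sum_prod_type']
  have hzero : ∀ x ∈ (Finset.univ : Finset (Fin d × Fin d)),
      x ∉ ({(a, e), (e, a)} : Finset (Fin d × Fin d)) →
      (if x.1 ≤ x.2 then (p x.1 x.2 : ℂ) * (dicke x.1 x.2 (a, e) * dicke x.1 x.2 (c, b)) else 0)
        = 0 := by
    intro ⟨i, j⟩ _ hx
    simp only [Finset.mem_insert, Finset.mem_singleton] at hx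
    push_neg at hx
    have h2 : (a, e) ≠ (j, i) := by
      intro hh
      apply hx.2
      rw [Prod.ext_iff] at hh ⊢
      exact ⟨hh.2.symm, hh.1.symm⟩
    simp [dicke_apply_ne (Ne.symm hx.1) h2]
  rw [← Finset.sum_subset (Finset.subset_univ _) hzero]
  by_cases hae : a = e
  · -- diagonal case
    subst hae
    rw [show ({(a, a), (a, a)} : Finset (Fin d × Fin d)) = {(a, a)} by simp,
      Finset.sum_singleton]
    simp only [le_refl, if_true]
    have hd : dicke a a (a, a) = 1 := by simp [dicke]
    have hd2 : dicke a a (c, b) = if (c, b) = (a, a) then 1 else 0 := by simp [dicke]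
    rw [hd, hd2]
    unfold Aform Mds
    by_cases hb : b = a <;> by_cases hc : c = a
    · simp [hb, hc, Prod.ext_iff, eq_comm]
    · simp [hb, hc, Prod.ext_iff, eq_comm]
    · simp [hb, hc, Prod.ext_iff, eq_comm]
    · simp [hb, hc, Prod.ext_iff, eq_comm]
      exact fun h => absurd h.symm hc
  · rw [Finset.sum_pair (by simp [Prod.ext_iff, hae, Ne.symm hae])]
    have hd1 : dicke a e (a, e) = (((Real.sqrt 2)⁻¹ : ℝ) : ℂ) := by
      simp [dicke, hae]
    have hd1' : dicke e a (a, e) = (((Real.sqrt 2)⁻¹ : ℝ) : ℂ) := by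
      simp [dicke, Ne.symm hae]
    have hd2 : dicke a e (c, b)
        = if (c, b) = (a, e) ∨ (c, b) = (e, a) then (((Real.sqrt 2)⁻¹ : ℝ) : ℂ) else 0 := by
      simp [dicke, hae]
    have hd2' : dicke e a (c, b)
        = if (c, b) = (a, e) ∨ (c, b) = (e, a) then (((Real.sqrt 2)⁻¹ : ℝ) : ℂ) else 0 := by
      simp [dicke, Ne.symm hae, or_comm]
    simp only [hd1, hd1', hd2, hd2']
    have hsq : (((Real.sqrt 2)⁻¹ : ℝ) : ℂ) * (((Real.sqrt 2)⁻¹ : ℝ) : ℂ) = ((2⁻¹ : ℝ) : ℂ) := by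
      rw [← Complex.ofReal_mul, sqrt2_inv_sq]
    by_cases hC : (c, b) = (a, e) ∨ (c, b) = (e, a)
    · rw [if_pos hC]
      simp only [hsq]
      have key : (if a ≤ e then (p a e : ℂ) * ((2⁻¹ : ℝ) : ℂ) else 0)
          + (if e ≤ a then (p e a : ℂ) * ((2⁻¹ : ℝ) : ℂ) else 0)
          = (((if a ≤ e then p a e else p e a) / 2 : ℝ) : ℂ) := by
        rcases le_or_gt a e with h | h
        · have h2 : ¬ e ≤ a := fun hh => hae (le_antisymm h hh)
          rw [if_pos h, if_neg h2, if_pos h]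
          push_cast; ring
        · rw [if_neg (not_le_of_gt h), if_pos h.le, if_neg (not_le_of_gt h)]
          push_cast; ring
      rw [key]
      unfold Aform Mds
      simp only [Matrix.of_apply]
      rcases hC with h | h <;> simp only [Prod.mk.injEq] at h <;> obtain ⟨h1, h2⟩ := h
      · -- h1 : c = a, h2 : b = e
        have hab : ¬ (a = b) := fun hh => hae (hh.trans h2)
        have c1 : ¬ (a = b ∧ c = e) := fun hh => hab hh.1
        have c2 : ((a, b) : Fin d × Fin d) = (c, e) := by
          rw [Prod.ext_iff]; exact ⟨h1.symm, h2⟩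
        rw [if_neg c1, if_pos c2, if_neg hab, h2]
      · -- h1 : c = e, h2 : b = a
        have c1 : (a = b ∧ c = e) := ⟨h2.symm, h1⟩
        rw [if_pos c1]
        have hac : ¬ a = c := fun hh => hae (hh.trans h1)
        rw [if_neg hac, h1]
    · rw [if_neg hC]
      have c1 : ¬ ((a = b) ∧ c = e) := by
        rintro ⟨hh1, hh2⟩
        exact hC (Or.inr (by rw [Prod.ext_iff]; exact ⟨hh2, hh1.symm⟩))
      have c2 : ((a, b) : Fin d × Fin d) ≠ (c, e) := by
        intro hh
        rw [Prod.ext_iff] at hh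
        exact hC (Or.inl (by rw [Prod.ext_iff]; exact ⟨hh.1.symm, hh.2⟩))
      unfold Aform
      simp only [Matrix.of_apply, if_neg c1, if_neg c2]
      simp


lemma mds_nonneg {d : ℕ} (p : Fin d → Fin d → ℝ) (hp0 : ∀ i j : Fin d, i ≤ j → 0 ≤ p i j)
    (i j : Fin d) : 0 ≤ Mds p i j := by
  unfold Mds
  simp only [Matrix.of_apply]
  split_ifs with h1 h2
  · exact hp0 i i le_rfl
  · exact div_nonneg (hp0 i j h2) (by norm_num)
  · exact div_nonneg (hp0 j i (le_of_not_ge h2)) (by norm_num)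

lemma dot_expand {n : Type*} [Fintype n] {R : Type*} [CommRing R] [StarRing R]
    (M : Matrix n n R) (x : n → R) :
    star x ⬝ᵥ M *ᵥ x = ∑ i, ∑ j, M i j * (star (x i) * x j) := by
  simp only [dotProduct, Matrix.mulVec, Pi.star_apply, Finset.mul_sum]
  exact Finset.sum_congr rfl fun i _ => Finset.sum_congr rfl fun j _ => by ring

lemma map_psd_of_psd {n : Type*} [Fintype n] {M : Matrix n n ℝ} (hM : M.PosSemidef) :
    (M.map (fun r => (r : ℂ))).PosSemidef := by
  have hsym : ∀ i j, M j i = M i j := fun i j => by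
    conv_rhs => rw [← hM.1]
    simp [Matrix.conjTranspose_apply]
  refine Matrix.PosSemidef.of_dotProduct_mulVec_nonneg ?_ ?_
  · ext i j
    simp only [Matrix.conjTranspose_apply, Matrix.map_apply, Complex.star_def,
      Complex.conj_ofReal]
    exact_mod_cast hsym i j
  · intro x
    rw [dot_expand]
    have hterm : ∀ i j : n, (M.map (fun r => (r : ℂ))) i j * (star (x i) * x j)
        = (M i j : ℂ) * (star (x i) * x j) := fun i j => rfl
    simp only [hterm]
    rw [Complex.nonneg_iff]
    constructor
    · -- real part
      rw [Complex.re_sum]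
      simp only [Complex.re_sum]
      have hre : ∀ i j : n, ((M i j : ℂ) * (star (x i) * x j)).re
          = M i j * ((x i).re * (x j).re) + M i j * ((x i).im * (x j).im) := by
        intro i j
        simp only [Complex.mul_re, Complex.mul_im, Complex.ofReal_re, Complex.ofReal_im,
          Complex.star_def, Complex.conj_re, Complex.conj_im]
        ring
      simp only [hre]
      have split : ∑ i, ∑ j, (M i j * ((x i).re * (x j).re) + M i j * ((x i).im * (x j).im))
          = (∑ i, ∑ j, M i j * ((x i).re * (x j).re))
            + ∑ i, ∑ j, M i j * ((x i).im * (x j).im) := by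
        rw [← Finset.sum_add_distrib]
        exact Finset.sum_congr rfl fun i _ => Finset.sum_add_distrib
      rw [split]
      have e1 : ∀ y : n → ℝ, (0:ℝ) ≤ ∑ i, ∑ j, M i j * (y i * y j) := by
        intro y
        have h := hM.dotProduct_mulVec_nonneg y
        rw [dot_expand] at h
        simpa using h
      exact add_nonneg (e1 (fun i => (x i).re)) (e1 (fun i => (x i).im))
    · -- imaginary part
      rw [Complex.im_sum]
      simp only [Complex.im_sum]
      have him : ∀ i j : n, ((M i j : ℂ) * (star (x i) * x j)).im
          = M i j * ((x i).re * (x j).im - (x i).im * (x j).re) := by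
        intro i j
        simp only [Complex.mul_re, Complex.mul_im, Complex.ofReal_re, Complex.ofReal_im,
          Complex.star_def, Complex.conj_re, Complex.conj_im]
        ring
      simp only [him]
      set T := ∑ i, ∑ j, M i j * ((x i).re * (x j).im - (x i).im * (x j).re) with hT
      have hTT : T = -T := by
        calc T = ∑ j : n, ∑ i : n, M i j * ((x i).re * (x j).im - (x i).im * (x j).re) :=
              Finset.sum_comm
          _ = ∑ j : n, ∑ i : n, -(M j i * ((x j).re * (x i).im - (x j).im * (x i).re)) :=
              Finset.sum_congr rfl fun j _ => Finset.sum_congr rfl fun i _ => by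
                rw [hsym]; ring
          _ = -T := by simp only [Finset.sum_neg_distrib, hT]
      linarith


lemma sum_diag {d : ℕ} (f : Fin d × Fin d → ℂ) (hf : ∀ u : Fin d × Fin d, u.1 ≠ u.2 → f u = 0) :
    ∑ u : Fin d × Fin d, f u = ∑ i : Fin d, f (i, i) := by
  rw [Fintype.sum_prod_type]
  refine Finset.sum_congr rfl fun i _ => ?_
  refine Finset.sum_eq_single i (fun j _ hj => hf (i, j) fun h => hj h.symm) ?_
  exact fun h => absurd (Finset.mem_univ i) h

lemma mds_herm {d : ℕ} (p : Fin d → Fin d → ℝ) : (Mds p).IsHermitian := by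
  ext i j
  simp only [Matrix.conjTranspose_apply, star_trivial]
  exact mds_symm p j i

lemma aform_herm {d : ℕ} (p : Fin d → Fin d → ℝ) : (Aform p).IsHermitian := by
  ext x y
  simp only [Matrix.conjTranspose_apply, Aform, Matrix.of_apply]
  by_cases h1 : x.1 = x.2 <;> by_cases h2 : y.1 = y.2 <;> by_cases h3 : x = y
  all_goals try simp_all [and_comm, eq_comm, Complex.star_def, Complex.conj_ofReal]
  all_goals exact mds_symm p _ _

/-- The `B` part: the diagonal-pair block carrying `M_d`. -/
noncomputable def Bform {d : ℕ} (p : Fin d → Fin d → ℝ) :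
    Matrix (Fin d × Fin d) (Fin d × Fin d) ℂ :=
  Matrix.of fun x y => if x.1 = x.2 ∧ y.1 = y.2 then (Mds p x.1 y.1 : ℂ) else 0

lemma aform_decomp {d : ℕ} (p : Fin d → Fin d → ℝ) :
    Aform p = Bform p
      + Matrix.diagonal (fun x : Fin d × Fin d => if x.1 = x.2 then 0 else (Mds p x.1 x.2 : ℂ)) := by
  ext x y
  simp only [Aform, Bform, Matrix.add_apply, Matrix.diagonal_apply, Matrix.of_apply]
  by_cases h1 : x.1 = x.2 <;> by_cases h2 : y.1 = y.2 <;> by_cases h3 : x = y <;>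
    simp_all

lemma bform_psd {d : ℕ} (p : Fin d → Fin d → ℝ) (hM : (Mds p).PosSemidef) :
    (Bform p).PosSemidef := by
  refine Matrix.PosSemidef.of_dotProduct_mulVec_nonneg ?_ ?_
  · ext x y
    simp only [Matrix.conjTranspose_apply, Bform, Matrix.of_apply]
    by_cases h1 : x.1 = x.2 <;> by_cases h2 : y.1 = y.2
    all_goals try simp_all [and_comm, Complex.star_def, Complex.conj_ofReal]
    all_goals exact mds_symm p _ _
  · intro x
    rw [dot_expand]
    have h1 : ∀ u : Fin d × Fin d, u.1 ≠ u.2 →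
        (∑ v : Fin d × Fin d, Bform p u v * (star (x u) * x v)) = 0 := by
      intro u hu
      refine Finset.sum_eq_zero fun v _ => ?_
      simp [Bform, hu]
    rw [sum_diag _ h1]
    have h2 : ∀ i : Fin d, (∑ v : Fin d × Fin d, Bform p (i, i) v * (star (x (i, i)) * x v))
        = ∑ j : Fin d, (Mds p i j : ℂ) * (star (x (i, i)) * x (j, j)) := by
      intro i
      rw [sum_diag _ (fun v hv => by simp [Bform, hv])]
      exact Finset.sum_congr rfl fun j _ => by simp [Bform]
    simp only [h2]
    have h3 := (map_psd_of_psd hM).dotProduct_mulVec_nonneg (fun i => x (i, i))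
    rw [dot_expand] at h3
    simpa [Matrix.map_apply] using h3

lemma mds_psd_of_aform {d : ℕ} (p : Fin d → Fin d → ℝ) (hA : (Aform p).PosSemidef) :
    (Mds p).PosSemidef := by
  refine Matrix.PosSemidef.of_dotProduct_mulVec_nonneg (mds_herm p) fun v => ?_
  have h := hA.dotProduct_mulVec_nonneg (fun u : Fin d × Fin d => if u.1 = u.2 then (v u.1 : ℂ) else 0)
  rw [dot_expand] at h
  have h1 : ∀ u : Fin d × Fin d, u.1 ≠ u.2 →
      (∑ w : Fin d × Fin d, Aform p u w *
        (star (if u.1 = u.2 then (v u.1 : ℂ) else 0) *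
          (if w.1 = w.2 then (v w.1 : ℂ) else 0))) = 0 := by
    intro u hu
    refine Finset.sum_eq_zero fun w _ => ?_
    simp [hu]
  rw [sum_diag _ h1] at h
  have h2 : ∀ i : Fin d,
      (∑ w : Fin d × Fin d, Aform p (i, i) w *
        (star (if (i, i).1 = (i, i).2 then (v (i, i).1 : ℂ) else 0) *
          (if w.1 = w.2 then (v w.1 : ℂ) else 0)))
      = ∑ j : Fin d, (Mds p i j : ℂ) * ((v i : ℂ) * (v j : ℂ)) := by
    intro i
    rw [sum_diag _ (fun w hw => by simp [hw])]
    refine Finset.sum_congr rfl fun j _ => ?_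
    simp [Aform, Complex.conj_ofReal]
  rw [show (∑ i : Fin d, ∑ w : Fin d × Fin d, Aform p (i, i) w *
        (star (if (i, i).1 = (i, i).2 then (v (i, i).1 : ℂ) else 0) *
          (if w.1 = w.2 then (v w.1 : ℂ) else 0)))
      = ∑ i : Fin d, ∑ j : Fin d, (Mds p i j : ℂ) * ((v i : ℂ) * (v j : ℂ)) from
    Finset.sum_congr rfl fun i _ => h2 i] at h
  have hcast : (((∑ i : Fin d, ∑ j : Fin d, Mds p i j * (v i * v j)) : ℝ) : ℂ)
      = ∑ i : Fin d, ∑ j : Fin d, (Mds p i j : ℂ) * ((v i : ℂ) * (v j : ℂ)) := by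
    push_cast
    rfl
  rw [← hcast] at h
  have hre := Complex.zero_le_real.mp h
  rw [dot_expand]
  simpa using hre

/-- The partial transpose of a DS state is positive semidefinite iff `M_d(ρ_DS)` is
positive semidefinite; since `M_d(ρ_DS)` is automatically entrywise nonnegative,
`ρ_DS` is PPT iff `M_d(ρ_DS)` is doubly nonnegative. -/
theorem rhoDS_ppt_iff_Mds {d : ℕ} (p : Fin d → Fin d → ℝ)
    (hp0 : ∀ i j : Fin d, i ≤ j → 0 ≤ p i j)
    (hp1 : ∑ i : Fin d, ∑ j : Fin d, (if i ≤ j then p i j else 0) = 1) :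
    ((partialTransposeB (rhoDS p)).PosSemidef ↔ (Mds p).PosSemidef) ∧
    (∀ i j, 0 ≤ Mds p i j) ∧
    ((partialTransposeB (rhoDS p)).PosSemidef ↔
      ((Mds p).PosSemidef ∧ ∀ i j, 0 ≤ Mds p i j)) := by
  have hnn : ∀ i j, 0 ≤ Mds p i j := fun i j => mds_nonneg p hp0 i j
  have hdiag : (Matrix.diagonal (fun x : Fin d × Fin d =>
      if x.1 = x.2 then 0 else (Mds p x.1 x.2 : ℂ))).PosSemidef := by
    refine Matrix.PosSemidef.diagonal fun u => ?_
    dsimp only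
    split_ifs
    · exact le_refl _
    · exact Complex.zero_le_real.mpr (hnn _ _)
  have key : (partialTransposeB (rhoDS p)).PosSemidef ↔ (Mds p).PosSemidef := by
    rw [pt_eq]
    refine ⟨mds_psd_of_aform p, fun hM => ?_⟩
    rw [aform_decomp]
    exact (bform_psd p hM).add hdiag
  exact ⟨key, hnn, key.trans ⟨fun h => ⟨h, hnn⟩, fun h => h.1⟩⟩
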